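/- arXiv:1207.7203 — 5 statements merged into one kernel-verified Lean document; each statement's English description precedes it below -/
import Mathlib

section
/- For σ > 0, z > 0 and s > 0, the convolution identity holds: (1/Γ(σ)) ∫₀^s (s-t)^{σ-1} · (z^{2σ}/(4^σ Γ(σ))) · e^{-z²/(4t)} / t^{1+σ} dt = (1/Γ(σ)) · e^{-z²/(4s)} / s^{1-σ}. -/
open Real MeasureTheory Set

theorem convolution_identity (σ z s : ℝ) (hσ : 0 < σ) (hz : 0 < z) (hs : 0 < s) :
    (1 / Real.Gamma σ) *
      ∫ t in Ioo (0:ℝ) s,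
        (s - t) ^ (σ - 1) *
          (z ^ (2 * σ) / (4 ^ σ * Real.Gamma σ) * Real.exp (-z ^ 2 / (4 * t)) / t ^ (1 + σ)) =
    (1 / Real.Gamma σ) * Real.exp (-z ^ 2 / (4 * s)) / s ^ (1 - σ) := by
  have hΓ : 0 < Real.Gamma σ := Real.Gamma_pos_of_pos hσ
  set f : ℝ → ℝ := fun u => s / (1 + s * u) with hf
  set f' : ℝ → ℝ := fun u => -(s ^ 2 / (1 + s * u) ^ 2) with hf'
  have hwpos : ∀ u : ℝ, 0 < u → 0 < 1 + s * u := fun u hu => by positivity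
  have himg : Ioo (0:ℝ) s = f '' Ioi 0 := by
    ext x
    constructor
    · rintro ⟨hx0, hxs⟩
      refine ⟨(s - x) / (s * x), mem_Ioi.mpr (div_pos (by linarith) (by positivity)), ?_⟩
      show s / (1 + s * ((s - x) / (s * x))) = x
      have key : 1 + s * ((s - x) / (s * x)) = s / x := by
        field_simp
        ring
      rw [key]
      field_simp
    · rintro ⟨u, hu, rfl⟩
      have hw := hwpos u hu
      constructor
      · positivity
      · show s / (1 + s * u) < s
        rw [div_lt_iff₀ hw]
        nlinarith [mul_pos hs (mem_Ioi.mp hu)]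
  have hderiv : ∀ u ∈ Ioi (0:ℝ), HasDerivWithinAt f (f' u) (Ioi 0) u := by
    intro u hu
    have hw := hwpos u (mem_Ioi.mp hu)
    have h1 : HasDerivAt (fun u : ℝ => 1 + s * u) s u := by
      simpa using (hasDerivAt_id u).const_mul s |>.const_add 1
    have := (hasDerivAt_const u s).div h1 hw.ne'
    exact this.hasDerivWithinAt.congr_deriv (by simp only [hf']; ring)
  have hinj : InjOn f (Ioi 0) := by
    intro u hu v hv h
    have hwu := hwpos u (mem_Ioi.mp hu)
    have hwv := hwpos v (mem_Ioi.mp hv)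
    have : (1 : ℝ) + s * u = 1 + s * v := by
      have h' : s / (1 + s * u) = s / (1 + s * v) := h
      rw [div_eq_div_iff hwu.ne' hwv.ne'] at h'
      exact mul_left_cancel₀ hs.ne' (by linarith : s * (1 + s * u) = s * (1 + s * v))
    have := mul_left_cancel₀ hs.ne' (by linarith : s * u = s * v)
    linarith
  rw [himg, integral_image_eq_integral_abs_deriv_smul measurableSet_Ioi hderiv hinj]
  have hcong : ∀ u ∈ Ioi (0:ℝ), |f' u| • ((s - f u) ^ (σ - 1) *
      (z ^ (2 * σ) / (4 ^ σ * Real.Gamma σ) * Real.exp (-z ^ 2 / (4 * f u)) / f u ^ (1 + σ))) =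
      (z ^ (2 * σ) / (4 ^ σ * Real.Gamma σ) * s ^ (σ - 1) * Real.exp (-z ^ 2 / (4 * s))) *
      (u ^ (σ - 1) * Real.exp (-(z ^ 2 / 4 * u))) := by
    intro u hu
    have hu0 : 0 < u := mem_Ioi.mp hu
    have hw : 0 < 1 + s * u := hwpos u hu0
    have habs : |f' u| = s ^ 2 / (1 + s * u) ^ 2 := by
      show |(-(s ^ 2 / (1 + s * u) ^ 2))| = _
      rw [abs_neg, abs_of_pos (by positivity)]
    have hsub : s - f u = s * s * u / (1 + s * u) := by
      show s - s / (1 + s * u) = _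
      field_simp
      ring
    have hexp : -z ^ 2 / (4 * f u) = -z ^ 2 / (4 * s) + -(z ^ 2 / 4 * u) := by
      show -z ^ 2 / (4 * (s / (1 + s * u))) = _
      field_simp
      ring
    have hfu : f u = s / (1 + s * u) := rfl
    rw [smul_eq_mul, habs, hsub, hexp, Real.exp_add, hfu]
    have hC : (0:ℝ) < z ^ (2 * σ) / (4 ^ σ * Real.Gamma σ) := by positivity
    have hL : (0:ℝ) < s ^ 2 / (1 + s * u) ^ 2 * ((s * s * u / (1 + s * u)) ^ (σ - 1) *
        (z ^ (2 * σ) / (4 ^ σ * Real.Gamma σ) * (Real.exp (-z ^ 2 / (4 * s)) * Real.exp (-(z ^ 2 / 4 * u))) /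
          (s / (1 + s * u)) ^ (1 + σ))) := by positivity
    have hR : (0:ℝ) < z ^ (2 * σ) / (4 ^ σ * Real.Gamma σ) * s ^ (σ - 1) * Real.exp (-z ^ 2 / (4 * s)) *
        (u ^ (σ - 1) * Real.exp (-(z ^ 2 / 4 * u))) := by positivity
    apply Real.log_injOn_pos (mem_Ioi.mpr hL) (mem_Ioi.mpr hR)
    have n1 : ((s * s * u / (1 + s * u)) : ℝ) ^ (σ - 1) ≠ 0 := by positivity
    have n2 : ((s / (1 + s * u)) : ℝ) ^ (1 + σ) ≠ 0 := by positivity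
    have n3 : (s : ℝ) ^ (σ - 1) ≠ 0 := by positivity
    have n4 : (u : ℝ) ^ (σ - 1) ≠ 0 := by positivity
    have n5 : ((4:ℝ) ^ σ) ≠ 0 := by positivity
    have n6 : (z : ℝ) ^ (2 * σ) ≠ 0 := by positivity
    have n7 : (s : ℝ) ^ 2 ≠ 0 := by positivity
    have n8 : ((1 + s * u) : ℝ) ^ 2 ≠ 0 := by positivity
    rw [Real.log_mul (by positivity) (by positivity), Real.log_mul n1 (by positivity),
      Real.log_div (by positivity) n2, Real.log_mul hC.ne' (by positivity),
      Real.log_mul (Real.exp_ne_zero _) (Real.exp_ne_zero _),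
      Real.log_div n7 n8, Real.log_div n6 (by positivity), Real.log_mul n5 hΓ.ne',
      Real.log_mul (by positivity : (z ^ (2 * σ) / (4 ^ σ * Real.Gamma σ) * s ^ (σ - 1) *
        Real.exp (-z ^ 2 / (4 * s)) : ℝ) ≠ 0) (by positivity),
      Real.log_mul (by positivity : (z ^ (2 * σ) / (4 ^ σ * Real.Gamma σ) * s ^ (σ - 1) : ℝ) ≠ 0)
        (Real.exp_ne_zero _),
      Real.log_mul (hC.ne') n3, Real.log_div n6 (by positivity), Real.log_mul n5 hΓ.ne',
      Real.log_mul n4 (Real.exp_ne_zero _),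
      Real.log_rpow (by positivity), Real.log_rpow (by positivity), Real.log_rpow hs,
      Real.log_rpow hu0, Real.log_exp, Real.log_exp, Real.log_pow, Real.log_pow,
      Real.log_div (by positivity : (s*s*u:ℝ) ≠ 0) hw.ne',
      Real.log_rpow (show (0:ℝ) < s / (1 + s * u) by positivity), Real.log_div hs.ne' hw.ne',
      Real.log_mul (by positivity : (s*s:ℝ) ≠ 0) hu0.ne', Real.log_mul hs.ne' hs.ne']
    push_cast
    ring
  rw [setIntegral_congr_fun measurableSet_Ioi hcong, integral_const_mul,
    integral_rpow_mul_exp_neg_mul_Ioi hσ (by positivity : (0:ℝ) < z ^ 2 / 4)]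
  have h1 : ((1 / (z ^ 2 / 4)) : ℝ) ^ σ = 4 ^ σ / z ^ (2 * σ) := by
    rw [one_div_div, Real.div_rpow (by norm_num) (by positivity), ← Real.rpow_natCast z 2,
      ← Real.rpow_mul hz.le]
    norm_num [mul_comm]
  have h2 : s ^ (1 - σ) * s ^ (σ - 1) = 1 := by
    rw [← Real.rpow_add hs]
    norm_num
  have hzz : (z:ℝ) ^ (2*σ) ≠ 0 := by positivity
  have h4 : ((4:ℝ) ^ σ) ≠ 0 := by positivity
  rw [h1, mul_div_assoc, show (1:ℝ) - σ = -(σ-1) by ring, Real.rpow_neg hs.le, div_inv_eq_mul]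
  field_simp
end

section
/- For 0 < σ < 1, (1/Γ(σ)) ∫₀^∞ t^{σ-1} (e^{-1/t} - 1) dt = Γ(-σ)/Γ(σ), where Γ(-σ) is interpreted via the functional equation Γ(-σ) = -Γ(1-σ)/σ. -/
open Real MeasureTheory Set Filter Topology

lemma aux_integrable (σ : ℝ) (hσ0 : 0 < σ) (hσ1 : σ < 1) :
    IntegrableOn (fun y : ℝ => (Real.exp (-y) - 1) * y ^ (-σ - 1)) (Ioi 0) := by
  have hmeas : ∀ s : Set ℝ, s ⊆ Ioi 0 → MeasurableSet s →
      AEStronglyMeasurable (fun y : ℝ => (Real.exp (-y) - 1) * y ^ (-σ - 1))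
        (volume.restrict s) := by
    intro s hs hms
    apply ContinuousOn.aestronglyMeasurable _ hms
    apply ContinuousOn.mul
    · exact (Real.continuous_exp.comp continuous_neg).continuousOn.sub continuousOn_const
    · exact fun x hx => (Real.continuousAt_rpow_const x _ (Or.inl (ne_of_gt (hs hx)))).continuousWithinAt
  have h01 : IntegrableOn (fun y : ℝ => (Real.exp (-y) - 1) * y ^ (-σ - 1)) (Ioc 0 1) := by
    have hbound : IntegrableOn (fun y : ℝ => y ^ (-σ)) (Ioc 0 1) :=
      (intervalIntegral.intervalIntegrable_rpow' (by linarith : (-1:ℝ) < -σ)).1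
    refine Integrable.mono' hbound (hmeas _ Ioc_subset_Ioi_self measurableSet_Ioc) ?_
    filter_upwards [ae_restrict_mem measurableSet_Ioc] with y hy
    have hy0 : 0 < y := hy.1
    have hle : Real.exp (-y) ≤ 1 := Real.exp_le_one_iff.mpr (by linarith)
    have h1 : |Real.exp (-y) - 1| ≤ y := by
      rw [abs_sub_comm, abs_of_nonneg (by linarith)]
      nlinarith [Real.add_one_le_exp (-y)]
    have h2 : (0:ℝ) ≤ y ^ (-σ - 1) := Real.rpow_nonneg hy0.le _
    calc ‖(Real.exp (-y) - 1) * y ^ (-σ - 1)‖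
        = |Real.exp (-y) - 1| * y ^ (-σ - 1) := by
          rw [norm_mul, Real.norm_eq_abs, Real.norm_eq_abs, abs_of_nonneg h2]
      _ ≤ y * y ^ (-σ - 1) := by
          exact mul_le_mul_of_nonneg_right h1 h2
      _ = y ^ (1:ℝ) * y ^ (-σ - 1) := by rw [Real.rpow_one]
      _ = y ^ (-σ) := by rw [← Real.rpow_add hy0]; congr 1; ring
  have h1i : IntegrableOn (fun y : ℝ => (Real.exp (-y) - 1) * y ^ (-σ - 1)) (Ioi 1) := by
    have hbound : IntegrableOn (fun y : ℝ => y ^ (-σ - 1)) (Ioi 1) :=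
      integrableOn_Ioi_rpow_of_lt (by linarith) one_pos
    refine Integrable.mono' hbound
      (hmeas _ (fun x hx => mem_Ioi.mpr (lt_trans one_pos (mem_Ioi.mp hx))) measurableSet_Ioi) ?_
    filter_upwards [ae_restrict_mem measurableSet_Ioi] with y hy
    have hy0 : 0 < y := lt_trans one_pos hy
    have h2 : (0:ℝ) ≤ y ^ (-σ - 1) := Real.rpow_nonneg hy0.le _
    have hle : Real.exp (-y) ≤ 1 := Real.exp_le_one_iff.mpr (by linarith)
    have h1 : |Real.exp (-y) - 1| ≤ 1 := by
      rw [abs_sub_comm, abs_of_nonneg (by linarith)]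
      have := Real.exp_pos (-y); linarith
    calc ‖(Real.exp (-y) - 1) * y ^ (-σ - 1)‖
        = |Real.exp (-y) - 1| * y ^ (-σ - 1) := by
          rw [norm_mul, Real.norm_eq_abs, Real.norm_eq_abs, abs_of_nonneg h2]
      _ ≤ 1 * y ^ (-σ - 1) := mul_le_mul_of_nonneg_right h1 h2
      _ = y ^ (-σ - 1) := one_mul _
  have := h01.union h1i
  rwa [Ioc_union_Ioi_eq_Ioi zero_le_one] at this

lemma aux_ibp (σ : ℝ) (hσ0 : 0 < σ) (hσ1 : σ < 1) :
    ∫ y in Ioi (0:ℝ), y ^ (-σ - 1) * (Real.exp (-y) - 1) = -Real.Gamma (1 - σ) / σ := by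
  have h1σ : (0:ℝ) < 1 - σ := by linarith
  have gamma_conv : IntegrableOn (fun y : ℝ => Real.exp (-y) * y ^ (-σ)) (Ioi 0) := by
    have := Real.GammaIntegral_convergent h1σ
    rwa [show (1:ℝ) - σ - 1 = -σ by ring] at this
  have gamma_int : ∫ y in Ioi (0:ℝ), Real.exp (-y) * y ^ (-σ) = Real.Gamma (1 - σ) := by
    rw [Real.Gamma_eq_integral h1σ, show (1:ℝ) - σ - 1 = -σ by ring]
  have key := MeasureTheory.integral_Ioi_mul_deriv_eq_deriv_mul (a := (0:ℝ))
    (u := fun y => Real.exp (-y) - 1) (u' := fun y => -Real.exp (-y))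
    (v := fun y => -y ^ (-σ) / σ) (v' := fun y => y ^ (-σ - 1))
    (a' := 0) (b' := 0)
    (fun y hy => by
      simpa using (((Real.hasDerivAt_exp (-y)).comp y (hasDerivAt_neg y)).sub_const 1))
    (fun y hy => by
      have h := (Real.hasDerivAt_rpow_const (p := -σ) (Or.inl (ne_of_gt hy))).neg.div_const σ
      convert h using 1
      · funext x; simp only [Pi.neg_apply, neg_div]
      · rw [neg_mul, neg_neg, mul_comm, mul_div_assoc, div_self hσ0.ne', mul_one])
    (by
      have := aux_integrable σ hσ0 hσ1
      exact this.congr_fun (fun y hy => rfl) measurableSet_Ioi)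
    (by
      have heq : (fun y : ℝ => -Real.exp (-y) * (-y ^ (-σ) / σ)) =
          fun y : ℝ => Real.exp (-y) * y ^ (-σ) / σ := by funext y; ring
      have : IntegrableOn (fun y : ℝ => Real.exp (-y) * y ^ (-σ) / σ) (Ioi 0) :=
        gamma_conv.div_const σ
      exact (heq ▸ this).congr_fun (fun y hy => rfl) measurableSet_Ioi)
    (by
      -- limit at 0⁺ of (exp(-y)-1) * (-y^(-σ)/σ)
      have hslope : Tendsto (fun y : ℝ => (Real.exp (-y) - 1) / (-y)) (𝓝[>] 0) (𝓝 1) := by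
        have hd : HasDerivAt (fun y : ℝ => Real.exp (-y)) (-1) 0 := by
          simpa using (hasDerivAt_id' (0:ℝ)).neg.exp
        have := hasDerivAt_iff_tendsto_slope.mp hd
        have h2 : Tendsto (slope (fun y : ℝ => Real.exp (-y)) 0) (𝓝[>] 0) (𝓝 (-1)) :=
          this.mono_left (nhdsWithin_mono _ (fun y hy => ne_of_gt hy))
        have h3 := h2.neg
        rw [show -(-1 : ℝ) = 1 by ring] at h3
        refine h3.congr (fun y => ?_)
        simp only [slope, vsub_eq_sub, sub_zero, neg_zero, Real.exp_zero, smul_eq_mul]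
        rw [div_neg, div_eq_inv_mul]
      have hpow : Tendsto (fun y : ℝ => y ^ (1 - σ) / σ) (𝓝[>] 0) (𝓝 0) := by
        have hc : Tendsto (fun y : ℝ => y ^ (1 - σ)) (𝓝[>] 0) (𝓝 ((0:ℝ) ^ (1 - σ))) :=
          ((Real.continuousAt_rpow_const 0 (1 - σ)
            (Or.inr (by linarith))).continuousWithinAt).tendsto
        rw [Real.zero_rpow (by linarith : (1:ℝ) - σ ≠ 0)] at hc
        simpa using hc.div_const σ
      have := hslope.mul hpow
      rw [mul_zero] at this
      refine this.congr' ?_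
      filter_upwards [self_mem_nhdsWithin] with y (hy : 0 < y)
      have hy0 : y ≠ 0 := ne_of_gt hy
      simp only [Pi.mul_apply]
      rw [show (1:ℝ) - σ = 1 + -σ by ring, Real.rpow_add hy, Real.rpow_one]
      field_simp)
    (by
      -- limit at ∞
      have h1 : Tendsto (fun y : ℝ => Real.exp (-y) - 1) atTop (𝓝 (0 - 1)) := by
        exact (Real.tendsto_exp_atBot.comp tendsto_neg_atTop_atBot).sub_const 1
      have h2 : Tendsto (fun y : ℝ => -y ^ (-σ) / σ) atTop (𝓝 (-0 / σ)) :=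
        ((tendsto_rpow_neg_atTop hσ0).neg).div_const σ
      have := h1.mul h2
      norm_num at this
      exact this)
  have key' : ∫ x in Ioi (0:ℝ), (Real.exp (-x) - 1) * x ^ (-σ - 1) =
      0 - 0 - ∫ x in Ioi (0:ℝ), -Real.exp (-x) * (-x ^ (-σ) / σ) := key
  have e : ∫ x in Ioi (0:ℝ), -Real.exp (-x) * (-x ^ (-σ) / σ)
      = ∫ x in Ioi (0:ℝ), Real.exp (-x) * x ^ (-σ) / σ :=
    setIntegral_congr_fun measurableSet_Ioi (fun y _ => by ring)
  rw [e, integral_div, gamma_int] at key'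
  rw [show (∫ y in Ioi (0:ℝ), y ^ (-σ - 1) * (Real.exp (-y) - 1)) =
      ∫ y in Ioi (0:ℝ), (Real.exp (-y) - 1) * y ^ (-σ - 1) from
    setIntegral_congr_fun measurableSet_Ioi (fun y _ => mul_comm _ _), key']
  ring

theorem integral_rpow_exp_sub_one (σ : ℝ) (hσ0 : 0 < σ) (hσ1 : σ < 1) :
    (1 / Real.Gamma σ) * ∫ t in Ioi (0:ℝ), t ^ (σ - 1) * (Real.exp (-1 / t) - 1) =
      (-Real.Gamma (1 - σ) / σ) / Real.Gamma σ := by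
  have key : ∫ t in Ioi (0:ℝ), t ^ (σ - 1) * (Real.exp (-1 / t) - 1)
      = ∫ y in Ioi (0:ℝ), y ^ (-σ - 1) * (Real.exp (-y) - 1) := by
    rw [← MeasureTheory.integral_comp_rpow_Ioi
      (fun y : ℝ => y ^ (-σ - 1) * (Real.exp (-y) - 1)) (p := -1) (by norm_num)]
    refine setIntegral_congr_fun measurableSet_Ioi (fun x hx => ?_)
    have hx0 : (0:ℝ) < x := hx
    have e1 : (x ^ (-1:ℝ)) ^ (-σ - 1) = x ^ (σ + 1) := by
      rw [← Real.rpow_mul hx0.le]; ring_nf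
    have e2 : x ^ (-1:ℝ) = 1 / x := by rw [Real.rpow_neg_one]; exact (one_div x).symm
    rw [smul_eq_mul, e1, e2]
    rw [show -(1/x) = -1/x by ring]
    rw [show (-1:ℝ) - 1 = -2 by norm_num]
    rw [show |(-1:ℝ)| = 1 by norm_num, one_mul]
    rw [show x ^ (-2:ℝ) * (x ^ (σ + 1) * (Real.exp (-1/x) - 1))
        = (x ^ (-2:ℝ) * x ^ (σ + 1)) * (Real.exp (-1/x) - 1) by ring]
    rw [← Real.rpow_add hx0, show (-2:ℝ) + (σ + 1) = σ - 1 by ring]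
  rw [key, aux_ibp σ hσ0 hσ1]
  ring
end

section
/- Let (T(t))_{t≥0} be a uniformly bounded C₀-semigroup on a Banach space X with generator A, 0 < σ < 1, and f ∈ X. Define u(y) = (y^{2σ}/(4^σ Γ(σ))) ∫₀^∞ e^{-y²/(4t)} t^{-1-σ} T(t)f dt for y > 0. Then sup_{y>0} ‖u(y)‖ ≤ C ‖f‖ for a constant C depending only on the semigroup bound, and u(y) → f in X as y → 0⁺. -/
open Real MeasureTheory Set Filter Topology

noncomputable def kern (σ y t : ℝ) : ℝ := Real.exp (-y ^ 2 / (4 * t)) * t ^ (-1 - σ)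

lemma kern_eq (σ y : ℝ) : EqOn (kern σ y)
    (fun t => Real.exp (-(y ^ 2 / 4 / t)) * t ^ (-1 - σ)) (Ioi 0) := by
  intro t _
  simp only [kern]
  rw [show -y ^ 2 / (4 * t) = -(y ^ 2 / 4 / t) by ring]

lemma aux_key {a s : ℝ} (hs : 0 < s) {x : ℝ} (hx : 0 < x) :
    (|(-1 : ℝ)| * x ^ ((-1 : ℝ) - 1)) •
      (Real.exp (-(a / x ^ (-1 : ℝ))) * (x ^ (-1 : ℝ)) ^ (-1 - s))
      = x ^ (s - 1) * Real.exp (-(a * x)) := by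
  have h1 : x ^ (-1 : ℝ) = x⁻¹ := by rw [Real.rpow_neg hx.le, Real.rpow_one]
  have h2 : (x⁻¹) ^ (-1 - s) = x ^ (1 + s) := by
    rw [← Real.rpow_neg_one x, ← Real.rpow_mul hx.le]
    norm_num
    rw [add_comm]
  rw [smul_eq_mul, h1, div_inv_eq_mul, h2, abs_neg, abs_one, one_mul]
  rw [mul_comm (Real.exp (-(a * x))) (x ^ (1 + s)), ← mul_assoc, ← Real.rpow_add hx]
  norm_num
  congr 1
  ring

lemma aux_integrable_s15 {a s : ℝ} (ha : 0 < a) (hs : 0 < s) :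
    IntegrableOn (fun t => Real.exp (-(a / t)) * t ^ (-1 - s)) (Ioi 0) := by
  rw [← integrableOn_Ioi_comp_rpow_iff _ (show (-1 : ℝ) ≠ 0 by norm_num)]
  apply ((integrableOn_rpow_mul_exp_neg_mul_rpow (s := s - 1) (p := 1) (b := a)
    (by linarith) zero_lt_one ha).congr_fun ?_ measurableSet_Ioi)
  intro x hx
  simp only [Real.rpow_one, neg_mul]
  exact (aux_key hs hx).symm

lemma aux_integral {a s : ℝ} (ha : 0 < a) (hs : 0 < s) :
    ∫ t in Ioi (0 : ℝ), Real.exp (-(a / t)) * t ^ (-1 - s) = Real.Gamma s * a ^ (-s) := by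
  rw [← integral_comp_rpow_Ioi (fun t => Real.exp (-(a / t)) * t ^ (-1 - s))
    (show (-1 : ℝ) ≠ 0 by norm_num)]
  rw [setIntegral_congr_fun measurableSet_Ioi
    (show EqOn _ (fun x : ℝ => x ^ (s - 1) * Real.exp (-(a * x))) (Ioi 0) from
      fun x hx => aux_key hs hx)]
  rw [integral_rpow_mul_exp_neg_mul_Ioi hs ha, one_div, Real.inv_rpow ha.le,
    ← Real.rpow_neg ha.le, mul_comm]

lemma kern_integrableOn {σ : ℝ} (hσ : 0 < σ) {y : ℝ} (hy : 0 < y) :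
    IntegrableOn (kern σ y) (Ioi 0) := by
  exact (aux_integrable_s15 (show (0:ℝ) < y ^ 2 / 4 by positivity) hσ).congr_fun
    (kern_eq σ y).symm measurableSet_Ioi

lemma kern_integral {σ : ℝ} (hσ : 0 < σ) {y : ℝ} (hy : 0 < y) :
    ∫ t in Ioi (0 : ℝ), kern σ y t = Real.Gamma σ * (y ^ 2 / 4) ^ (-σ) := by
  rw [setIntegral_congr_fun measurableSet_Ioi (kern_eq σ y)]
  exact aux_integral (by positivity) hσ

lemma kern_norm {σ : ℝ} (hσ : 0 < σ) {y : ℝ} (hy : 0 < y) :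
    (y ^ (2 * σ) / (4 ^ σ * Real.Gamma σ)) * ∫ t in Ioi (0 : ℝ), kern σ y t = 1 := by
  rw [kern_integral hσ hy]
  have hΓ : 0 < Real.Gamma σ := Real.Gamma_pos_of_pos hσ
  have h2 : y ^ (2 * σ) = (y ^ 2) ^ σ := by
    rw [← Real.rpow_natCast y 2, ← Real.rpow_mul hy.le]
    norm_num
  have h3 : (y ^ 2 / 4 : ℝ) ^ (-σ) = 4 ^ σ / (y ^ 2) ^ σ := by
    rw [Real.rpow_neg (by positivity), Real.div_rpow (by positivity) (by norm_num), inv_div]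
  rw [h2, h3]
  have hy2 : (0 : ℝ) < (y ^ 2) ^ σ := Real.rpow_pos_of_pos (by positivity) _
  have h4 : (0 : ℝ) < 4 ^ σ := Real.rpow_pos_of_pos (by norm_num) _
  field_simp

theorem extension_solution_bounded_and_converges
    {X : Type*} [NormedAddCommGroup X] [NormedSpace ℝ X] [CompleteSpace X]
    (T : ℝ → X →L[ℝ] X) (M : ℝ)
    (hT0 : T 0 = ContinuousLinearMap.id ℝ X)
    (hTsemi : ∀ s t : ℝ, 0 ≤ s → 0 ≤ t → T (s + t) = (T s).comp (T t))
    (hTbound : ∀ t : ℝ, 0 ≤ t → ‖T t‖ ≤ M)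
    (hTcont : ∀ f : X, ContinuousOn (fun t => T t f) (Ici (0:ℝ)))
    (σ : ℝ) (hσ0 : 0 < σ) (hσ1 : σ < 1)
    (u : X → ℝ → X)
    (hu : ∀ (f : X) (y : ℝ), u f y =
      (y ^ (2 * σ) / (4 ^ σ * Real.Gamma σ)) •
        ∫ t in Ioi (0:ℝ), (Real.exp (-y ^ 2 / (4 * t)) * t ^ (-1 - σ)) • T t f) :
    (∃ C : ℝ, ∀ (f : X) (y : ℝ), 0 < y → ‖u f y‖ ≤ C * ‖f‖) ∧
    ∀ f : X, Tendsto (u f) (𝓝[>] (0:ℝ)) (𝓝 f) := by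
  have hΓ : 0 < Real.Gamma σ := Real.Gamma_pos_of_pos hσ0
  have hM0 : 0 ≤ M := le_trans (norm_nonneg (T 0)) (hTbound 0 le_rfl)
  have hu' : ∀ (f : X) (y : ℝ), u f y =
      (y ^ (2 * σ) / (4 ^ σ * Real.Gamma σ)) • ∫ t in Ioi (0:ℝ), kern σ y t • T t f := by
    intro f y; rw [hu]; rfl
  have hkcont : ∀ y : ℝ, ContinuousOn (kern σ y) (Ioi 0) := by
    intro y
    apply ContinuousOn.mul
    · apply Real.continuous_exp.comp_continuousOn
      apply ContinuousOn.div continuousOn_const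
      · exact (continuous_const.mul continuous_id).continuousOn
      · intro t ht
        have ht' : (0:ℝ) < t := ht
        positivity
    · intro t ht
      exact (Real.continuousAt_rpow_const t _ (Or.inl (ne_of_gt ht))).continuousWithinAt
  have hknn : ∀ y : ℝ, ∀ t : ℝ, 0 < t → 0 ≤ kern σ y t := by
    intro y t ht
    unfold kern
    positivity
  have hmeas : ∀ (y : ℝ) (g : ℝ → X), ContinuousOn g (Ici 0) →
      AEStronglyMeasurable (fun t => kern σ y t • g t) (volume.restrict (Ioi 0)) := by
    intro y g hg
    exact (ContinuousOn.smul (hkcont y) (hg.mono Ioi_subset_Ici_self)).aestronglyMeasurable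
      measurableSet_Ioi
  have hint : ∀ {y : ℝ}, 0 < y → ∀ (g : ℝ → X) (B : ℝ), ContinuousOn g (Ici 0) →
      (∀ t ∈ Ioi (0:ℝ), ‖g t‖ ≤ B) →
      IntegrableOn (fun t => kern σ y t • g t) (Ioi 0) := by
    intro y hy g B hg hB
    apply Integrable.mono' ((kern_integrableOn hσ0 hy).mul_const B) (hmeas y g hg)
    filter_upwards [ae_restrict_mem measurableSet_Ioi] with t ht
    rw [norm_smul, Real.norm_eq_abs, abs_of_nonneg (hknn y t ht)]
    exact mul_le_mul_of_nonneg_left (hB t ht) (hknn y t ht)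
  have hTfb : ∀ (f : X), ∀ t ∈ Ioi (0:ℝ), ‖T t f‖ ≤ M * ‖f‖ := fun f t ht =>
    le_trans ((T t).le_opNorm f)
      (mul_le_mul_of_nonneg_right (hTbound t (le_of_lt ht)) (norm_nonneg f))
  constructor
  · refine ⟨M, fun f y hy => ?_⟩
    have hc : 0 ≤ y ^ (2*σ) / (4 ^ σ * Real.Gamma σ) := by positivity
    rw [hu' f y, norm_smul, Real.norm_eq_abs, abs_of_nonneg hc]
    have h1 : ‖∫ t in Ioi (0:ℝ), kern σ y t • T t f‖
        ≤ ∫ t in Ioi (0:ℝ), kern σ y t * (M * ‖f‖) := by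
      apply norm_integral_le_of_norm_le ((kern_integrableOn hσ0 hy).mul_const _)
      filter_upwards [ae_restrict_mem measurableSet_Ioi] with t ht
      rw [norm_smul, Real.norm_eq_abs, abs_of_nonneg (hknn y t ht)]
      exact mul_le_mul_of_nonneg_left (hTfb f t ht) (hknn y t ht)
    calc y ^ (2*σ) / (4 ^ σ * Real.Gamma σ) * ‖∫ t in Ioi (0:ℝ), kern σ y t • T t f‖
        ≤ y ^ (2*σ) / (4 ^ σ * Real.Gamma σ) * ∫ t in Ioi (0:ℝ), kern σ y t * (M * ‖f‖) :=
          mul_le_mul_of_nonneg_left h1 hc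
      _ = (y ^ (2*σ) / (4 ^ σ * Real.Gamma σ) * ∫ t in Ioi (0:ℝ), kern σ y t) * (M * ‖f‖) := by
          rw [integral_mul_const]; ring
      _ = M * ‖f‖ := by rw [kern_norm hσ0 hy, one_mul]
  · intro f
    rw [Metric.tendsto_nhds]
    intro ε hε
    obtain ⟨δ', hδ'pos, hδ'⟩ := Metric.tendsto_nhdsWithin_nhds.mp
      (hTcont f 0 Set.self_mem_Ici) (ε/4) (by positivity)
    set δ₀ := δ' / 2 with hδ₀def
    have hδ₀ : 0 < δ₀ := by positivity
    have hnear : ∀ t ∈ Ioc (0:ℝ) δ₀, ‖T t f - f‖ ≤ ε/4 := by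
      intro t ht
      have h1 : dist t 0 < δ' := by
        rw [Real.dist_eq, sub_zero, abs_of_pos ht.1]
        have := ht.2
        simp only [hδ₀def] at this
        linarith
      have h2 := hδ' (mem_Ici.mpr ht.1.le) h1
      simp only [hT0, ContinuousLinearMap.coe_id', id_eq] at h2
      rw [dist_eq_norm] at h2
      exact h2.le
    have hdiffb : ∀ t ∈ Ioi (0:ℝ), ‖T t f - f‖ ≤ (M+1) * ‖f‖ := by
      intro t ht
      calc ‖T t f - f‖ ≤ ‖T t f‖ + ‖f‖ := norm_sub_le _ _
        _ ≤ M * ‖f‖ + ‖f‖ := by have := hTfb f t ht; linarith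
        _ = (M+1) * ‖f‖ := by ring
    set Q : ℝ := (M + 1) * ‖f‖ * (δ₀ ^ (-σ) / σ) with hQdef
    have hQ : 0 ≤ Q := by positivity
    set K : ℝ := Q / (4 ^ σ * Real.Gamma σ) with hKdef
    have hK : 0 ≤ K := by positivity
    have htend : Tendsto (fun y : ℝ => y ^ (2*σ) * K) (𝓝[>] (0:ℝ)) (𝓝 0) := by
      have h1 : Tendsto (fun y : ℝ => y ^ (2*σ)) (𝓝 (0:ℝ)) (𝓝 ((0:ℝ) ^ (2*σ))) :=
        (Real.continuousAt_rpow_const 0 (2*σ) (Or.inr (by positivity))).tendsto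
      rw [Real.zero_rpow (by positivity)] at h1
      have h2 : Tendsto (fun y : ℝ => y ^ (2*σ) * K) (𝓝[>] (0:ℝ)) (𝓝 (0 * K)) :=
        Tendsto.mul_const K (h1.mono_left nhdsWithin_le_nhds)
      simpa using h2
    have hev := htend.eventually_lt_const (show (0:ℝ) < ε/4 by positivity)
    filter_upwards [hev, self_mem_nhdsWithin] with y hy1 hy2
    have hy : (0:ℝ) < y := hy2
    rw [dist_eq_norm]
    have hcontsub : ContinuousOn (fun t => T t f - f) (Ici 0) :=
      (hTcont f).sub continuousOn_const
    have hid : IntegrableOn (fun t => kern σ y t • (T t f - f)) (Ioi 0) :=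
      hint hy _ ((M+1)*‖f‖) hcontsub hdiffb
    have hiT : IntegrableOn (fun t => kern σ y t • T t f) (Ioi 0) :=
      hint hy _ (M*‖f‖) (hTcont f) (hTfb f)
    have hif : IntegrableOn (fun t => kern σ y t • f) (Ioi 0) :=
      (kern_integrableOn hσ0 hy).smul_const f
    set c : ℝ := y ^ (2*σ) / (4 ^ σ * Real.Gamma σ) with hcdef
    have hc : 0 ≤ c := by positivity
    have hsub : u f y - f = c • ∫ t in Ioi (0:ℝ), kern σ y t • (T t f - f) := by
      have e1 : ∫ t in Ioi (0:ℝ), kern σ y t • (T t f - f)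
          = (∫ t in Ioi (0:ℝ), kern σ y t • T t f) - ∫ t in Ioi (0:ℝ), kern σ y t • f := by
        rw [← integral_sub hiT hif]
        congr 1
        ext t
        rw [smul_sub]
      have e2 : c • (∫ t in Ioi (0:ℝ), kern σ y t • f) = f := by
        rw [integral_smul_const, smul_smul, kern_norm hσ0 hy, one_smul]
      rw [e1, smul_sub, e2, hu' f y]
    rw [hsub]
    have hsplit : ∫ t in Ioi (0:ℝ), kern σ y t • (T t f - f)
        = (∫ t in Ioc (0:ℝ) δ₀, kern σ y t • (T t f - f))
          + ∫ t in Ioi δ₀, kern σ y t • (T t f - f) := by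
      rw [← setIntegral_union (Ioc_disjoint_Ioi le_rfl) measurableSet_Ioi
        (hid.mono_set Ioc_subset_Ioi_self) (hid.mono_set (Ioi_subset_Ioi hδ₀.le)),
        Ioc_union_Ioi_eq_Ioi hδ₀.le]
    have b1 : ‖∫ t in Ioc (0:ℝ) δ₀, kern σ y t • (T t f - f)‖
        ≤ (ε/4) * ∫ t in Ioi (0:ℝ), kern σ y t := by
      have s1 : ‖∫ t in Ioc (0:ℝ) δ₀, kern σ y t • (T t f - f)‖
          ≤ ∫ t in Ioc (0:ℝ) δ₀, kern σ y t * (ε/4) := by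
        apply norm_integral_le_of_norm_le
          (((kern_integrableOn hσ0 hy).mono_set Ioc_subset_Ioi_self).mul_const _)
        filter_upwards [ae_restrict_mem measurableSet_Ioc] with t ht
        rw [norm_smul, Real.norm_eq_abs, abs_of_nonneg (hknn y t ht.1)]
        exact mul_le_mul_of_nonneg_left (hnear t ht) (hknn y t ht.1)
      rw [integral_mul_const] at s1
      refine s1.trans ?_
      rw [mul_comm]
      apply mul_le_mul_of_nonneg_left ?_ (by positivity)
      apply setIntegral_mono_set (kern_integrableOn hσ0 hy) ?_
        (HasSubset.Subset.eventuallyLE Ioc_subset_Ioi_self)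
      filter_upwards [ae_restrict_mem measurableSet_Ioi] with t ht using hknn y t ht
    have b2 : ‖∫ t in Ioi δ₀, kern σ y t • (T t f - f)‖ ≤ Q := by
      have s1 : ‖∫ t in Ioi δ₀, kern σ y t • (T t f - f)‖
          ≤ ∫ t in Ioi δ₀, t ^ (-1 - σ) * ((M+1) * ‖f‖) := by
        apply norm_integral_le_of_norm_le
          ((integrableOn_Ioi_rpow_of_lt (by linarith) hδ₀).mul_const _)
        filter_upwards [ae_restrict_mem measurableSet_Ioi] with t ht
        have ht0 : (0:ℝ) < t := lt_trans hδ₀ ht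
        rw [norm_smul, Real.norm_eq_abs, abs_of_nonneg (hknn y t ht0)]
        have hexp : Real.exp (-y ^ 2 / (4 * t)) ≤ 1 := by
          apply Real.exp_le_one_iff.mpr
          apply div_nonpos_of_nonpos_of_nonneg
          · simpa using sq_nonneg y
          · positivity
        have hrp : (0:ℝ) ≤ t ^ (-1-σ) := (Real.rpow_pos_of_pos ht0 _).le
        have hk_le : kern σ y t ≤ t ^ (-1 - σ) := by
          have := mul_le_mul_of_nonneg_right hexp hrp
          simpa [kern] using this
        calc kern σ y t * ‖T t f - f‖
            ≤ kern σ y t * ((M+1)*‖f‖) :=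
              mul_le_mul_of_nonneg_left (hdiffb t ht0) (hknn y t ht0)
          _ ≤ t ^ (-1-σ) * ((M+1)*‖f‖) :=
              mul_le_mul_of_nonneg_right hk_le (by positivity)
      rw [integral_mul_const, integral_Ioi_rpow_of_lt (by linarith) hδ₀] at s1
      refine s1.trans (le_of_eq ?_)
      rw [hQdef, show (-1 - σ + 1 : ℝ) = -σ by ring]
      field_simp
    calc ‖c • ∫ t in Ioi (0:ℝ), kern σ y t • (T t f - f)‖
        = c * ‖∫ t in Ioi (0:ℝ), kern σ y t • (T t f - f)‖ := by
          rw [norm_smul, Real.norm_eq_abs, abs_of_nonneg hc]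
      _ ≤ c * (‖∫ t in Ioc (0:ℝ) δ₀, kern σ y t • (T t f - f)‖
            + ‖∫ t in Ioi δ₀, kern σ y t • (T t f - f)‖) := by
          rw [hsplit]
          exact mul_le_mul_of_nonneg_left (norm_add_le _ _) hc
      _ ≤ c * ((ε/4) * (∫ t in Ioi (0:ℝ), kern σ y t) + Q) :=
          mul_le_mul_of_nonneg_left (add_le_add b1 b2) hc
      _ = (ε/4) * (c * ∫ t in Ioi (0:ℝ), kern σ y t) + y ^ (2*σ) * K := by
          rw [hcdef, hKdef]
          ring
      _ = ε/4 + y ^ (2*σ) * K := by rw [kern_norm hσ0 hy, mul_one]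
      _ < ε := by linarith
end

section
/- For every n ∈ ℕ, σ > 0 and a < 0, the n-th derivative of t ↦ e^{a/t} t^{-(σ+1)} on (0,∞) has the form (-1)^n Σ_{m=0}^n c_{m,n,σ} p_m(a/t) t^{-(σ+n+1)} e^{a/t}, where c_{m,n,σ} = C(n,m)·C(σ+n-m, n-m)·(n-m)! and p_m is a polynomial of degree m with p_0 ≡ 1 and p_m(0) = 0 for m ≥ 1. In particular, the coefficient of the term with p_0 is c_{0,n,σ} = Γ(σ+n+1)/Γ(σ+1). -/
open Real Finset Polynomial

noncomputable def pp : ℕ → Polynomial ℝ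
  | 0 => 1
  | (m+1) => Polynomial.X * pp m +
      (Polynomial.X * (pp m).derivative + Polynomial.C (m : ℝ) * pp m)

noncomputable def cc (σ : ℝ) (n m : ℕ) : ℝ :=
  (n.choose m : ℝ) * (Real.Gamma (σ + n - m + 1) / Real.Gamma (σ + 1))

open Real Finset Polynomial


lemma pp_monic_deg (m : ℕ) : (pp m).Monic ∧ (pp m).natDegree = m := by
  induction m with
  | zero => simp [pp, monic_one]
  | succ m ih =>
    obtain ⟨hm, hd⟩ := ih
    have hXp : (Polynomial.X * pp m).Monic := monic_X.mul hm
    have hXd : (Polynomial.X * pp m).natDegree = m + 1 := by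
      rw [natDegree_mul X_ne_zero hm.ne_zero, natDegree_X, hd]; omega
    have hq : (Polynomial.X * (pp m).derivative + Polynomial.C (m : ℝ) * pp m).natDegree ≤ m := by
      rcases Nat.eq_zero_or_pos m with h0 | h0
      · subst h0; simp [pp]
      · apply le_trans (natDegree_add_le _ _)
        have h1 : (Polynomial.X * (pp m).derivative).natDegree ≤ m := by
          apply le_trans (natDegree_mul_le)
          have := natDegree_derivative_le (pp m)
          rw [natDegree_X, hd] at *
          omega
        have h2 : (Polynomial.C (m:ℝ) * pp m).natDegree ≤ m := by
          apply le_trans (natDegree_mul_le); simp [hd]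
        omega
    have hdegq : (Polynomial.X * (pp m).derivative + Polynomial.C (m : ℝ) * pp m).degree <
        (Polynomial.X * pp m).degree := by
      rw [degree_eq_natDegree hXp.ne_zero, hXd]
      exact lt_of_le_of_lt (degree_le_natDegree.trans (by exact_mod_cast Nat.cast_le.mpr hq)) (by exact_mod_cast Nat.lt_succ_self m)
    refine ⟨hXp.add_of_left hdegq, ?_⟩
    rw [show pp (m+1) = Polynomial.X * pp m + _ from rfl,
      natDegree_add_eq_left_of_degree_lt hdegq, hXd]

lemma pp_eval_step (m : ℕ) : (pp (m+1)).eval 0 = (m : ℝ) * (pp m).eval 0 := by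
  simp only [pp, eval_add, eval_mul, eval_X, eval_C, zero_mul, zero_add]

lemma pp_eval_zero : ∀ m : ℕ, (pp (m+1)).eval 0 = 0 := by
  intro m
  induction m with
  | zero => simp [pp]
  | succ k ih => rw [pp_eval_step, ih, mul_zero]

lemma cc_rec (σ : ℝ) (hσ : 0 < σ) (n m : ℕ) (hm : m ≤ n) :
    cc σ (n+1) (m+1) = cc σ n m + (σ + n - m) * cc σ n (m+1) := by
  have hpos : (0:ℝ) < σ + n - m := by
    have : (m:ℝ) ≤ n := by exact_mod_cast hm
    linarith
  have hΓ : Real.Gamma (σ + n - m + 1) = (σ + n - m) * Real.Gamma (σ + n - m) :=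
    Real.Gamma_add_one hpos.ne'
  have hc1 : σ + ↑(n+1) - ↑(m+1) + 1 = σ + n - m + 1 := by push_cast; ring
  have hc2 : σ + ↑n - ↑(m+1) + 1 = σ + n - m := by push_cast; ring
  rw [cc, cc, cc, hc1, hc2, Nat.choose_succ_succ]
  push_cast
  rw [hΓ]
  ring

lemma cc_zero_rec (σ : ℝ) (hσ : 0 < σ) (n : ℕ) :
    cc σ (n+1) 0 = (σ + n + 1) * cc σ n 0 := by
  have hpos : (0:ℝ) < σ + n + 1 := by positivity
  have hc1 : σ + ↑(n+1) - ↑(0:ℕ) + 1 = (σ + n + 1) + 1 := by push_cast; ring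
  have hc2 : σ + ↑n - ↑(0:ℕ) + 1 = σ + n + 1 := by push_cast; ring
  rw [cc, cc, hc1, hc2, Real.Gamma_add_one hpos.ne']
  simp [Nat.choose_zero_right]
  ring

lemma key_sum (σ : ℝ) (hσ : 0 < σ) (n : ℕ) (P : ℕ → ℝ) :
    ∑ m ∈ Finset.range (n+1), cc σ n m * (P (m+1) + (σ + n + 1 - m) * P m)
      = ∑ m ∈ Finset.range (n+2), cc σ (n+1) m * P m := by
  have hsplit : ∑ m ∈ Finset.range (n+1), cc σ n m * (P (m+1) + (σ + n + 1 - m) * P m)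
      = (∑ m ∈ Finset.range (n+1), cc σ n m * P (m+1))
        + ∑ m ∈ Finset.range (n+1), cc σ n m * (σ + n + 1 - m) * P m := by
    rw [← Finset.sum_add_distrib]
    exact Finset.sum_congr rfl fun m _ => by ring
  rw [hsplit]
  rw [Finset.sum_range_succ' (fun m => cc σ (n+1) m * P m) (n+1)]
  rw [Finset.sum_range_succ' (fun m => cc σ n m * (σ + n + 1 - m) * P m) n]
  have hlast : ∑ m ∈ Finset.range n, cc σ n (m+1) * (σ + ↑n + 1 - ↑(m+1)) * P (m+1)
      = ∑ m ∈ Finset.range (n+1), cc σ n (m+1) * (σ + ↑n + 1 - ↑(m+1)) * P (m+1) := by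
    rw [Finset.sum_range_succ]
    have : cc σ n (n+1) = 0 := by
      simp [cc, Nat.choose_eq_zero_of_lt (Nat.lt_succ_self n)]
    rw [this]; ring
  rw [hlast]
  have hmain : (∑ m ∈ Finset.range (n+1), cc σ n m * P (m+1))
      + (∑ m ∈ Finset.range (n+1), cc σ n (m+1) * (σ + ↑n + 1 - ↑(m+1)) * P (m+1))
      = ∑ m ∈ Finset.range (n+1), cc σ (n+1) (m+1) * P (m+1) := by
    rw [← Finset.sum_add_distrib]
    refine Finset.sum_congr rfl fun m hm => ?_
    have hm' : m ≤ n := Nat.lt_succ_iff.mp (Finset.mem_range.mp hm)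
    rw [cc_rec σ hσ n m hm']
    push_cast
    ring
  have hzero : cc σ n 0 * (σ + ↑n + 1 - ↑(0:ℕ)) * P 0 = cc σ (n+1) 0 * P 0 := by
    rw [cc_zero_rec σ hσ n]
    push_cast
    ring
  linarith [hmain, hzero]

lemma main_ind (σ a : ℝ) (hσ : 0 < σ) (n : ℕ) :
    ∀ t : ℝ, 0 < t →
      iteratedDeriv n (fun s : ℝ => Real.exp (a / s) * s ^ (-(σ + 1))) t
        = (-1) ^ n * ∑ m ∈ Finset.range (n + 1),
            cc σ n m * (pp m).eval (a / t) * t ^ (-(σ + n + 1)) * Real.exp (a / t) := by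
  induction n with
  | zero =>
    intro t ht
    rw [iteratedDeriv_zero]
    have hΓ : Real.Gamma (σ + 1) ≠ 0 := (Real.Gamma_pos_of_pos (by linarith)).ne'
    simp [cc, pp, div_self hΓ]
    ring
  | succ n ih =>
    intro t ht
    rw [iteratedDeriv_succ]
    have hev : iteratedDeriv n (fun s : ℝ => Real.exp (a / s) * s ^ (-(σ + 1)))
        =ᶠ[nhds t] fun u => (-1) ^ n * ∑ m ∈ Finset.range (n + 1),
            cc σ n m * (pp m).eval (a / u) * u ^ (-(σ + n + 1)) * Real.exp (a / u) := by
      filter_upwards [Ioi_mem_nhds ht] with u hu using ih u hu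
    rw [hev.deriv_eq]
    -- derivative building blocks
    have hx : HasDerivAt (fun s : ℝ => a / s) (-(a / t ^ 2)) t := by
      simpa [div_eq_mul_inv, mul_neg] using (hasDerivAt_inv ht.ne').const_mul a
    have h3 : HasDerivAt (fun s : ℝ => Real.exp (a / s)) (Real.exp (a / t) * -(a / t ^ 2)) t :=
      hx.exp
    have h2 : HasDerivAt (fun s : ℝ => s ^ (-(σ + n + 1)))
        (-(σ + n + 1) * t ^ (-(σ + n + 1) - 1)) t :=
      Real.hasDerivAt_rpow_const (Or.inl ht.ne')
    have hterm : ∀ m ∈ Finset.range (n+1),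
        HasDerivAt (fun u : ℝ => cc σ n m * (pp m).eval (a / u) * u ^ (-(σ + n + 1)) * Real.exp (a / u))
          ((cc σ n m * ((pp m).derivative.eval (a / t) * -(a / t ^ 2)) * t ^ (-(σ + n + 1))
              + cc σ n m * (pp m).eval (a / t) * (-(σ + n + 1) * t ^ (-(σ + n + 1) - 1)))
              * Real.exp (a / t)
            + cc σ n m * (pp m).eval (a / t) * t ^ (-(σ + n + 1))
              * (Real.exp (a / t) * -(a / t ^ 2))) t := by
      intro m _
      have h1 : HasDerivAt (fun u : ℝ => (pp m).eval (a / u))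
          ((pp m).derivative.eval (a / t) * -(a / t ^ 2)) t := by
        simpa [Function.comp_def] using (Polynomial.hasDerivAt (pp m) (a / t)).comp t hx
      exact ((h1.const_mul (cc σ n m)).mul h2).mul h3
    have hsum := HasDerivAt.fun_sum hterm
    have hF := hsum.const_mul ((-1 : ℝ) ^ n)
    rw [hF.deriv]
    -- now pure algebra
    have hper : ∀ m ∈ Finset.range (n+1),
        (cc σ n m * ((pp m).derivative.eval (a / t) * -(a / t ^ 2)) * t ^ (-(σ + n + 1))
            + cc σ n m * (pp m).eval (a / t) * (-(σ + n + 1) * t ^ (-(σ + n + 1) - 1)))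
            * Real.exp (a / t)
          + cc σ n m * (pp m).eval (a / t) * t ^ (-(σ + n + 1))
            * (Real.exp (a / t) * -(a / t ^ 2))
        = -(cc σ n m * ((pp (m+1)).eval (a / t) + (σ + n + 1 - m) * (pp m).eval (a / t)))
            * (t ^ (-(σ + n + 1)) / t) * Real.exp (a / t) := by
      intro m _
      have hpsucc : (pp (m+1)).eval (a / t)
          = (a / t) * (pp m).eval (a / t)
            + ((a / t) * (pp m).derivative.eval (a / t) + m * (pp m).eval (a / t)) := by
        simp [pp]
      have ha2 : a / t ^ 2 = a / t / t := by rw [sq, div_div]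
      have hT : t ^ (-(σ + ↑n + 1) - 1) = t ^ (-(σ + ↑n + 1)) / t := by
        rw [Real.rpow_sub ht, Real.rpow_one]
      rw [hpsucc, ha2, hT]
      field_simp
      ring
    rw [Finset.sum_congr rfl hper]
    have hfact : ∑ m ∈ Finset.range (n+1),
        -(cc σ n m * ((pp (m+1)).eval (a / t) + (σ + n + 1 - m) * (pp m).eval (a / t)))
          * (t ^ (-(σ + n + 1)) / t) * Real.exp (a / t)
        = -((∑ m ∈ Finset.range (n+1),
            cc σ n m * ((pp (m+1)).eval (a / t) + (σ + n + 1 - m) * (pp m).eval (a / t)))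
          * (t ^ (-(σ + n + 1)) / t) * Real.exp (a / t)) := by
      rw [← Finset.sum_mul, ← Finset.sum_mul, Finset.sum_neg_distrib, neg_mul, neg_mul]
    rw [hfact, key_sum σ hσ n (fun m => (pp m).eval (a / t))]
    have hT2 : t ^ (-(σ + ↑(n+1) + 1)) = t ^ (-(σ + ↑n + 1)) / t := by
      rw [show -(σ + ↑(n+1) + 1) = -(σ + ↑n + 1) - 1 by push_cast; ring,
        Real.rpow_sub ht, Real.rpow_one]
    have hrhs : ∑ m ∈ Finset.range (n+2),
        cc σ (n+1) m * (pp m).eval (a / t) * t ^ (-(σ + ↑(n+1) + 1)) * Real.exp (a / t)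
        = (∑ m ∈ Finset.range (n+2), cc σ (n+1) m * (pp m).eval (a / t))
            * (t ^ (-(σ + n + 1)) / t) * Real.exp (a / t) := by
      rw [← Finset.sum_mul, ← Finset.sum_mul, hT2]
    rw [hrhs]
    ring

theorem iteratedDeriv_exp_inv_rpow_structure :
    ∃ p : ℕ → Polynomial ℝ,
      p 0 = 1 ∧
      (∀ m : ℕ, 1 ≤ m → (p m).natDegree = m ∧ (p m).eval 0 = 0) ∧
      ∀ (n : ℕ) (σ a t : ℝ), 0 < σ → a < 0 → 0 < t →
        iteratedDeriv n (fun s : ℝ => Real.exp (a / s) * s ^ (-(σ + 1))) t =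
          (-1) ^ n *
            ∑ m ∈ Finset.range (n + 1),
              ((n.choose m : ℝ) * (Real.Gamma (σ + n - m + 1) / Real.Gamma (σ + 1))) *
                (p m).eval (a / t) * t ^ (-(σ + n + 1)) * Real.exp (a / t) := by
  refine ⟨pp, rfl, ?_, ?_⟩
  · intro m hm
    refine ⟨(pp_monic_deg m).2, ?_⟩
    obtain ⟨k, rfl⟩ : ∃ k, m = k + 1 := ⟨m - 1, (Nat.succ_pred_eq_of_pos hm).symm⟩
    exact pp_eval_zero k
  · intro n σ a t hσ _ ht
    have := main_ind σ a hσ n t ht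
    simpa only [cc] using this
end

section
/- For 0 < σ < 1 and z with Re(z²) > 0, the function t ↦ (1/Γ(σ))(e^{-z²/(4t)} - 1) t^{σ-1} satisfies, for every n ∈ ℕ with n ≥ 1: ∫₀^∞ |(d^n/dt^n)[(e^{-z²/(4t)} - 1) t^{σ-1}]| t^n dt ≤ C_{n,σ} |z|^{2n}/(Re(z²))^{n-σ}, with C_{n,σ} independent of z. -/
open Real MeasureTheory Set


lemma pk_subst (a b x : ℝ) (hx : 0 < x) :
    (|(-1:ℝ)| * x ^ ((-1:ℝ) - 1)) • ((x ^ (-1:ℝ)) ^ (b - 1) * Real.exp (-(a * x ^ (-1:ℝ))))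
      = Real.exp (-(a/x)) * x ^ (-b - 1) := by
  have h1 : ((x:ℝ) ^ (-1:ℝ)) ^ (b-1) = x ^ ((-1) * (b-1)) := (Real.rpow_mul hx.le _ _).symm
  rw [h1, smul_eq_mul, abs_neg, abs_one, one_mul, Real.rpow_neg_one, ← div_eq_mul_inv,
    ← mul_assoc, ← Real.rpow_add hx]
  ring_nf

lemma pk_integrableOn_exp_inv (a b : ℝ) (ha : 0 < a) (hb : 0 < b) :
    IntegrableOn (fun t : ℝ => Real.exp (-(a/t)) * t ^ (-b - 1)) (Ioi 0) := by
  have hg : IntegrableOn (fun y : ℝ => y ^ (b - 1) * Real.exp (-(a * y))) (Ioi 0) := by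
    have := integrableOn_rpow_mul_exp_neg_mul_rpow (p := 1) (s := b - 1) (b := a)
      (by linarith) zero_lt_one ha
    refine this.congr_fun (fun x hx => ?_) measurableSet_Ioi
    simp only [Real.rpow_one, neg_mul]
  have key := (integrableOn_Ioi_comp_rpow_iff
    (fun y : ℝ => y ^ (b - 1) * Real.exp (-(a * y))) (p := (-1:ℝ)) (by norm_num)).mpr hg
  exact key.congr_fun (fun x hx => pk_subst a b x hx) measurableSet_Ioi

lemma pk_integral_exp_inv (a b : ℝ) (ha : 0 < a) (hb : 0 < b) :
    ∫ t in Ioi (0:ℝ), Real.exp (-(a/t)) * t ^ (-b - 1) = Real.Gamma b * a ^ (-b) := by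
  have key := integral_comp_rpow_Ioi
    (fun y : ℝ => y ^ (b - 1) * Real.exp (-(a * y))) (p := (-1:ℝ)) (by norm_num)
  rw [Real.integral_rpow_mul_exp_neg_mul_Ioi hb ha] at key
  rw [← setIntegral_congr_fun measurableSet_Ioi (fun x hx => (pk_subst a b x hx)), key,
    one_div, Real.inv_rpow ha.le, ← Real.rpow_neg ha.le, mul_comm]


noncomputable def pkCoef (σ : ℝ) : ℕ → ℕ → ℝ
  | 0, j => if j = 0 then 1 else 0
  | n+1, j => (σ - 1 - n - j) * pkCoef σ n j + (if j = 0 then 0 else pkCoef σ n (j-1))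

lemma pkCoef_eq_zero (σ : ℝ) : ∀ n j, n < j → pkCoef σ n j = 0 := by
  intro n
  induction n with
  | zero => intro j hj; simp [pkCoef, (Nat.pos_iff_ne_zero.mp hj)]
  | succ n ih =>
      intro j hj
      match j, hj with
      | j+1, hj =>
        have h1 : n < j + 1 := by omega
        have h2 : n < j := by omega
        simp [pkCoef, ih _ h1, ih _ h2]

noncomputable def pkF (σ : ℝ) (w : ℂ) (n : ℕ) (t : ℝ) : ℂ :=
  (∑ j ∈ Finset.range (n+1),
      (pkCoef σ n j : ℂ) * w^j * ((t ^ (σ - 1 - n - j) : ℝ) : ℂ) * Complex.exp (-w / t))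
    - (pkCoef σ n 0 : ℂ) * ((t ^ (σ - 1 - n) : ℝ) : ℂ)

lemma pk_hasDerivAt (σ : ℝ) (w : ℂ) (n : ℕ) (t : ℝ) (ht : 0 < t) :
    HasDerivAt (pkF σ w n) (pkF σ w (n+1) t) t := by
  have htne : (t:ℂ) ≠ 0 := by exact_mod_cast ht.ne'
  -- derivative of t ↦ exp (-w/t)
  have hv : HasDerivAt (fun s : ℝ => Complex.exp (-w / s))
      (Complex.exp (-w / t) * (w / (t:ℂ)^2)) t := by
    have h1 : HasDerivAt (fun s : ℝ => (s:ℂ)) 1 t := Complex.ofRealCLM.hasDerivAt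
    have h3 : HasDerivAt (fun s : ℝ => -w / (s:ℂ))
        ((0 * (t:ℂ) - (-w) * 1) / (t:ℂ)^2) t := (hasDerivAt_const t (-w)).div h1 htne
    have h4 := h3.cexp
    convert h4 using 1
    field_simp
    ring
  -- derivative of t ↦ ((t ^ e : ℝ) : ℂ)
  have hu : ∀ e : ℝ, HasDerivAt (fun s : ℝ => ((s ^ e : ℝ) : ℂ))
      (((e * t ^ (e - 1) : ℝ)) : ℂ) t :=
    fun e => (Real.hasDerivAt_rpow_const (Or.inl ht.ne')).ofReal_comp
  set E := fun s : ℝ => Complex.exp (-w / s) with hE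
  -- rpow shift lemma
  have hshift : ∀ e : ℝ, ((t ^ e : ℝ) : ℂ) * (Complex.exp (-w/t) * (w/(t:ℂ)^2))
      = w * ((t ^ (e-2) : ℝ) : ℂ) * Complex.exp (-w/t) := by
    intro e
    have h : (t:ℝ) ^ (e - 2) = t ^ e / t ^ (2:ℕ) := by
      rw [← Real.rpow_natCast t 2, ← Real.rpow_sub ht]
      norm_num
    rw [h]
    push_cast
    field_simp
  -- derivative of each summand
  have hterm : ∀ j : ℕ, HasDerivAt
      (fun s : ℝ => (pkCoef σ n j : ℂ) * w^j * ((s ^ (σ - 1 - n - j) : ℝ) : ℂ)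
        * Complex.exp (-w / s))
      ((pkCoef σ n j : ℂ) * w^j *
        ( (((σ - 1 - n - j) * t ^ (σ - 1 - n - j - 1) : ℝ) : ℂ) * Complex.exp (-w/t)
          + ((t ^ (σ - 1 - n - j) : ℝ) : ℂ) * (Complex.exp (-w/t) * (w/(t:ℂ)^2)) )) t := by
    intro j
    have h := ((hu (σ - 1 - n - j)).fun_mul hv).const_mul ((pkCoef σ n j : ℂ) * w^j)
    refine h.congr_of_eventuallyEq (Filter.Eventually.of_forall fun s => ?_)
    simp only [hE]
    ring
  have hsum := HasDerivAt.fun_sum (u := Finset.range (n+1))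
    (fun j _ => hterm j)
  have hlast := (hu (σ - 1 - n)).const_mul ((pkCoef σ n 0 : ℂ))
  have hD := hsum.fun_sub hlast
  convert hD using 1
  -- now pure algebra: pkF σ w (n+1) t equals the computed derivative
  show pkF σ w (n+1) t = _
  rw [pkF]
  have hexp1 : (σ - 1 - ((n:ℕ)+1:ℕ) : ℝ) = σ - 1 - n - 1 := by push_cast; ring
  congr 1
  · -- the sums
    have hsplit : ∀ j : ℕ, (pkCoef σ (n+1) j : ℂ)
        = ((σ - 1 - n - j : ℝ) : ℂ) * (pkCoef σ n j : ℂ)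
          + (if j = 0 then 0 else (pkCoef σ n (j-1) : ℂ)) := by
      intro j
      rw [pkCoef]
      push_cast
      split <;> push_cast <;> ring
    calc ∑ j ∈ Finset.range (n+1+1),
            (pkCoef σ (n+1) j : ℂ) * w^j * ((t ^ (σ - 1 - (n+1:ℕ) - j) : ℝ) : ℂ)
              * Complex.exp (-w / t)
        = (∑ j ∈ Finset.range (n+1+1),
            ((σ - 1 - n - j : ℝ) : ℂ) * (pkCoef σ n j : ℂ) * w^j
              * ((t ^ (σ - 1 - (n+1:ℕ) - j) : ℝ) : ℂ) * Complex.exp (-w / t))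
          + (∑ j ∈ Finset.range (n+1+1),
            (if j = 0 then 0 else (pkCoef σ n (j-1) : ℂ)) * w^j
              * ((t ^ (σ - 1 - (n+1:ℕ) - j) : ℝ) : ℂ) * Complex.exp (-w / t)) := by
          rw [← Finset.sum_add_distrib]
          refine Finset.sum_congr rfl (fun j _ => ?_)
          rw [hsplit j]
          ring
      _ = ∑ j ∈ Finset.range (n+1), (pkCoef σ n j : ℂ) * w^j *
            ( (((σ - 1 - n - j) * t ^ (σ - 1 - n - j - 1) : ℝ) : ℂ) * Complex.exp (-w/t)
              + ((t ^ (σ - 1 - n - j) : ℝ) : ℂ) * (Complex.exp (-w/t) * (w/(t:ℂ)^2)) ) := by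
          rw [Finset.sum_range_succ, pkCoef_eq_zero σ n (n+1) (by omega),
            Finset.sum_range_succ' _ (n+1)]
          simp only [Complex.ofReal_zero, zero_mul, mul_zero, add_zero, if_true,
            Nat.add_sub_cancel, reduceIte]
          rw [← Finset.sum_add_distrib]
          refine Finset.sum_congr rfl (fun j _ => ?_)
          rw [hshift (σ - 1 - n - j)]
          push_cast
          rw [show σ - 1 - ((n:ℝ)+1) - j = σ - 1 - (n:ℝ) - j - 1 from by ring,
            show σ - 1 - ((n:ℝ)+1) - ((j:ℝ)+1) = σ - 1 - (n:ℝ) - (j:ℝ) - 2 from by ring]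
          ring
  · -- the subtracted term
    rw [pkCoef, hexp1]
    simp only [if_pos rfl, add_zero, Nat.cast_zero, sub_zero]
    push_cast
    ring
  all_goals rfl


lemma pkF_def (σ : ℝ) (w : ℂ) (n : ℕ) (t : ℝ) : pkF σ w n t =
  (∑ j ∈ Finset.range (n+1),
      (pkCoef σ n j : ℂ) * w^j * ((t ^ (σ - 1 - n - j) : ℝ) : ℂ) * Complex.exp (-w / t))
    - (pkCoef σ n 0 : ℂ) * ((t ^ (σ - 1 - n) : ℝ) : ℂ) := rfl

lemma pkCoef_zero (σ : ℝ) (j : ℕ) : pkCoef σ 0 j = if j = 0 then 1 else 0 := rfl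


lemma pk_iteratedDeriv (σ : ℝ) (z : ℂ) (m : ℕ) :
    ∀ t ∈ Ioi (0:ℝ), iteratedDeriv m
      (fun s : ℝ => (Complex.exp (-z ^ 2 / (4 * s)) - 1) * (s : ℂ) ^ ((σ - 1 : ℝ) : ℂ))
      t = pkF σ (z^2/4) m t := by
  induction m with
  | zero =>
      intro t ht
      rw [iteratedDeriv_zero, pkF_def]
      rw [← Complex.ofReal_cpow (le_of_lt ht) (σ - 1)]
      have h4 : -z^2/(4*(t:ℂ)) = -(z^2/4)/t := by ring
      rw [h4]
      simp only [zero_add, Finset.sum_range_one, pkCoef_zero, reduceIte, Nat.cast_zero,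
        pow_zero, Complex.ofReal_one, one_mul, sub_zero]
      ring
  | succ m ih =>
      intro t ht
      rw [iteratedDeriv_succ]
      have hev : (iteratedDeriv m
          (fun s : ℝ => (Complex.exp (-z ^ 2 / (4 * s)) - 1) * (s : ℂ) ^ ((σ - 1 : ℝ) : ℂ)))
          =ᶠ[nhds t] pkF σ (z^2/4) m :=
        Filter.eventuallyEq_of_mem (Ioi_mem_nhds ht) ih
      rw [hev.deriv_eq, (pk_hasDerivAt σ (z^2/4) m t ht).deriv]


lemma pk_exp_sub_one_bound (w : ℂ) (hw : 0 < w.re) (t : ℝ) (ht : 0 < t) :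
    ‖Complex.exp (-w/(t:ℂ)) - 1‖ ≤ 2 * min 1 (‖w‖ / t) := by
  have habs : ‖-w/(t:ℂ)‖ = ‖w‖ / t := by
    rw [norm_div, norm_neg, Complex.norm_real, Real.norm_eq_abs, abs_of_pos ht]
  rcases le_total (‖w‖ / t) 1 with h | h
  · rw [min_eq_right h]
    have := Complex.norm_exp_sub_one_le (x := -w/(t:ℂ)) (by rw [habs]; exact h)
    simpa [habs, abs_of_pos ht] using this
  · rw [min_eq_left h]
    have h1 : ‖Complex.exp (-w/(t:ℂ))‖ ≤ 1 := by
      rw [Complex.norm_exp]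
      have : (-w/(t:ℂ)).re = -w.re / t := by
        rw [Complex.div_ofReal_re, Complex.neg_re]
      rw [this]
      exact Real.exp_le_one_iff.mpr (by rw [neg_div]; exact neg_nonpos.mpr (div_nonneg hw.le ht.le))
    calc ‖Complex.exp (-w/(t:ℂ)) - 1‖ ≤ ‖Complex.exp (-w/(t:ℂ))‖ + ‖(1:ℂ)‖ := norm_sub_le _ _
      _ ≤ 1 + 1 := by rw [norm_one]; linarith
      _ = 2 * 1 := by norm_num

lemma pk_norm_bound (σ : ℝ) (w : ℂ) (hw : 0 < w.re) (n : ℕ) (t : ℝ) (ht : 0 < t) :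
    ‖pkF σ w n t‖ * t^n ≤
      (∑ i ∈ Finset.range n, |pkCoef σ n (i+1)| * ‖w‖^(i+1) *
        (Real.exp (-(w.re/t)) * t ^ (-((i:ℝ)+1-σ) - 1)))
      + 2*|pkCoef σ n 0| * (min 1 (‖w‖/t) * t ^ (σ-1)) := by
  have hEnorm : ‖Complex.exp (-w/(t:ℂ))‖ = Real.exp (-(w.re/t)) := by
    rw [Complex.norm_exp]
    congr 1
    rw [Complex.div_ofReal_re, Complex.neg_re, neg_div]
  -- split pkF
  have hsplit : pkF σ w n t =
      (∑ i ∈ Finset.range n,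
        (pkCoef σ n (i+1) : ℂ) * w^(i+1) * ((t ^ (σ - 1 - n - (i+1:ℕ)) : ℝ) : ℂ)
          * Complex.exp (-w / t))
      + (pkCoef σ n 0 : ℂ) * ((t ^ (σ - 1 - n) : ℝ) : ℂ) * (Complex.exp (-w/t) - 1) := by
    rw [pkF_def, Finset.sum_range_succ' _ n]
    push_cast
    simp only [pow_zero, mul_one, sub_zero, one_mul]
    ring
  have hterm : ∀ (c e : ℝ) (k : ℕ),
      ‖(c:ℂ) * w^k * ((t^e:ℝ):ℂ) * Complex.exp (-w/(t:ℂ))‖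
        = |c| * ‖w‖^k * t^e * Real.exp (-(w.re/t)) := by
    intro c e k
    simp only [norm_mul, norm_pow, Complex.norm_real, Real.norm_eq_abs, Complex.norm_exp]
    rw [abs_of_nonneg (Real.rpow_nonneg ht.le _), Complex.div_ofReal_re, Complex.neg_re,
      neg_div]
  have hB : ‖(pkCoef σ n 0 : ℂ) * ((t ^ (σ - 1 - n) : ℝ) : ℂ) * (Complex.exp (-w/(t:ℂ)) - 1)‖
      ≤ |pkCoef σ n 0| * t ^ (σ - 1 - (n:ℝ)) * (2 * min 1 (‖w‖ / t)) := by
    rw [norm_mul, norm_mul, Complex.norm_real, Real.norm_eq_abs, Complex.norm_real,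
      Real.norm_eq_abs, abs_of_nonneg (Real.rpow_nonneg ht.le _)]
    exact mul_le_mul_of_nonneg_left (pk_exp_sub_one_bound w hw t ht)
      (by positivity)
  rw [hsplit]
  have hstep1 : ‖(∑ i ∈ Finset.range n,
        (pkCoef σ n (i+1) : ℂ) * w^(i+1) * ((t ^ (σ - 1 - n - (i+1:ℕ)) : ℝ) : ℂ)
          * Complex.exp (-w / t))
      + (pkCoef σ n 0 : ℂ) * ((t ^ (σ - 1 - n) : ℝ) : ℂ) * (Complex.exp (-w/t) - 1)‖ ≤
      ((∑ i ∈ Finset.range n,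
        |pkCoef σ n (i+1)| * ‖w‖^(i+1) * t ^ (σ - 1 - (n:ℝ) - ((i+1:ℕ):ℝ))
          * Real.exp (-(w.re/t)))
      + |pkCoef σ n 0| * t ^ (σ - 1 - (n:ℝ)) * (2 * min 1 (‖w‖ / t))) := by
    refine (norm_add_le _ _).trans (add_le_add ?_ hB)
    refine (norm_sum_le _ _).trans (le_of_eq (Finset.sum_congr rfl (fun i _ => ?_)))
    exact hterm _ _ _
  refine (mul_le_mul_of_nonneg_right hstep1 (by positivity)).trans (le_of_eq ?_)
  rw [add_mul, Finset.sum_mul]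
  congr 1
  · refine Finset.sum_congr rfl (fun i _ => ?_)
    rw [← Real.rpow_natCast t n]
    rw [show (|pkCoef σ n (i+1)| * ‖w‖^(i+1) * t ^ (σ - 1 - (n:ℝ) - ((i+1:ℕ):ℝ))
          * Real.exp (-(w.re/t))) * t ^ ((n:ℕ):ℝ)
        = |pkCoef σ n (i+1)| * ‖w‖^(i+1) *
          (Real.exp (-(w.re/t)) * (t ^ (σ - 1 - (n:ℝ) - ((i+1:ℕ):ℝ)) * t ^ ((n:ℕ):ℝ)))
        from by ring]
    rw [← Real.rpow_add ht]
    congr 2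
    push_cast
    ring
  · rw [← Real.rpow_natCast t n]
    rw [show (|pkCoef σ n 0| * t ^ (σ - 1 - (n:ℝ)) * (2 * min 1 (‖w‖ / t)))
          * t ^ ((n:ℕ):ℝ)
        = 2*|pkCoef σ n 0| * (min 1 (‖w‖ / t)
            * (t ^ (σ - 1 - (n:ℝ)) * t ^ ((n:ℕ):ℝ))) from by ring]
    rw [← Real.rpow_add ht]
    congr 2
    ring


section
variable {W σ : ℝ}

lemma pk_min_contOn (W σ : ℝ) : ContinuousOn (fun t : ℝ => min 1 (W/t) * t ^ (σ-1)) (Ioi 0) :=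
  ((((continuous_const.min continuous_id).comp_continuousOn
      (continuousOn_const.div continuousOn_id (fun x hx => ne_of_gt hx)))).mul
    (ContinuousOn.rpow_const continuousOn_id (fun x hx => Or.inl (ne_of_gt hx))))

lemma pk_min_int1 (hW : 0 < W) (hσ0 : 0 < σ) :
    IntegrableOn (fun t : ℝ => t ^ (σ-1)) (Ioc 0 W) := by
  have := intervalIntegral.intervalIntegrable_rpow' (a := 0) (b := W) (r := σ-1) (by linarith)
  rwa [intervalIntegrable_iff_integrableOn_Ioc_of_le hW.le] at this

lemma pk_min_intoc (hW : 0 < W) (hσ0 : 0 < σ) :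
    IntegrableOn (fun t : ℝ => min 1 (W/t) * t ^ (σ-1)) (Ioc 0 W) := by
  refine (pk_min_int1 hW hσ0).mono'
    (((pk_min_contOn W σ).mono Ioc_subset_Ioi_self).aestronglyMeasurable measurableSet_Ioc) ?_
  refine (ae_restrict_iff' measurableSet_Ioc).mpr (ae_of_all _ (fun t htc => ?_))
  have ht0 : 0 < t := htc.1
  have hmin0 : 0 ≤ min 1 (W/t) := le_min zero_le_one (div_nonneg hW.le ht0.le)
  rw [Real.norm_eq_abs, abs_of_nonneg (mul_nonneg hmin0 (Real.rpow_nonneg ht0.le _))]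
  calc min 1 (W/t) * t ^ (σ-1) ≤ 1 * t ^ (σ-1) :=
        mul_le_mul_of_nonneg_right (min_le_left _ _) (Real.rpow_nonneg ht0.le _)
    _ = t ^ (σ-1) := one_mul _

lemma pk_min_bound2 (hW : 0 < W) {t : ℝ} (ht : W < t) :
    min 1 (W/t) * t ^ (σ-1) ≤ W * t ^ (σ-1-1) := by
  have ht0 : 0 < t := hW.trans ht
  have h1 : min 1 (W/t) * t ^ (σ-1) ≤ (W/t) * t ^ (σ-1) :=
    mul_le_mul_of_nonneg_right (min_le_right _ _) (Real.rpow_nonneg ht0.le _)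
  refine h1.trans (le_of_eq ?_)
  conv_rhs => rw [Real.rpow_sub_one ht0.ne' (σ-1)]
  rw [div_mul_eq_mul_div, mul_div_assoc]

lemma pk_min_intoi (hW : 0 < W) (hσ1 : σ < 1) :
    IntegrableOn (fun t : ℝ => min 1 (W/t) * t ^ (σ-1)) (Ioi W) := by
  have I2 : IntegrableOn (fun t : ℝ => W * t ^ (σ-1-1)) (Ioi W) :=
    (integrableOn_Ioi_rpow_of_lt (by linarith) hW).const_mul W
  refine I2.mono'
    (((pk_min_contOn W σ).mono (Ioi_subset_Ioi hW.le)).aestronglyMeasurable measurableSet_Ioi) ?_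
  refine (ae_restrict_iff' measurableSet_Ioi).mpr (ae_of_all _ (fun t htc => ?_))
  have ht0 : 0 < t := hW.trans htc
  have hmin0 : 0 ≤ min 1 (W/t) := le_min zero_le_one (div_nonneg hW.le ht0.le)
  rw [Real.norm_eq_abs, abs_of_nonneg (mul_nonneg hmin0 (Real.rpow_nonneg ht0.le _))]
  exact pk_min_bound2 hW htc

lemma pk_min_integrableOn (hW : 0 < W) (hσ0 : 0 < σ) (hσ1 : σ < 1) :
    IntegrableOn (fun t : ℝ => min 1 (W/t) * t ^ (σ-1)) (Ioi 0) := by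
  rw [← Ioc_union_Ioi_eq_Ioi hW.le]
  exact (pk_min_intoc hW hσ0).union (pk_min_intoi hW hσ1)

lemma pk_min_integral_le (hW : 0 < W) (hσ0 : 0 < σ) (hσ1 : σ < 1) :
    ∫ t in Ioi (0:ℝ), min 1 (W/t) * t ^ (σ-1) ≤ (1/σ + 1/(1-σ)) * W ^ σ := by
  rw [← Ioc_union_Ioi_eq_Ioi hW.le,
    setIntegral_union (Ioc_disjoint_Ioi le_rfl) measurableSet_Ioi
      (pk_min_intoc hW hσ0) (pk_min_intoi hW hσ1)]
  have h1 : ∫ t in Ioc (0:ℝ) W, min 1 (W/t) * t ^ (σ-1) ≤ W ^ σ / σ := by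
    have hle : ∫ t in Ioc (0:ℝ) W, min 1 (W/t) * t ^ (σ-1) ≤ ∫ t in Ioc (0:ℝ) W, t ^ (σ-1) := by
      refine setIntegral_mono_on (pk_min_intoc hW hσ0) (pk_min_int1 hW hσ0)
        measurableSet_Ioc (fun t htc => ?_)
      calc min 1 (W/t) * t ^ (σ-1) ≤ 1 * t ^ (σ-1) :=
            mul_le_mul_of_nonneg_right (min_le_left _ _) (Real.rpow_nonneg htc.1.le _)
        _ = t ^ (σ-1) := one_mul _
    refine hle.trans (le_of_eq ?_)
    rw [← intervalIntegral.integral_of_le hW.le, integral_rpow (Or.inl (by linarith))]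
    rw [show σ - 1 + 1 = σ from by ring, Real.zero_rpow hσ0.ne']
    ring
  have h2 : ∫ t in Ioi W, min 1 (W/t) * t ^ (σ-1) ≤ W ^ σ / (1-σ) := by
    have hle : ∫ t in Ioi W, min 1 (W/t) * t ^ (σ-1) ≤ ∫ t in Ioi W, W * t ^ (σ-1-1) := by
      refine setIntegral_mono_on (pk_min_intoi hW hσ1)
        ((integrableOn_Ioi_rpow_of_lt (by linarith) hW).const_mul W)
        measurableSet_Ioi (fun t htc => pk_min_bound2 hW htc)
    refine hle.trans (le_of_eq ?_)
    rw [integral_const_mul, integral_Ioi_rpow_of_lt (by linarith) hW]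
    rw [show σ - 1 - 1 + 1 = σ - 1 from by ring]
    rw [show W * (-W ^ (σ-1) / (σ-1)) = (W ^ (σ-1) * W) * (-1/(σ-1)) from by ring,
      ← Real.rpow_add_one hW.ne' (σ-1)]
    rw [show σ - 1 + 1 = σ from by ring]
    rw [show -1/(σ-1) = 1/(1-σ) from by rw [div_eq_div_iff (by linarith) (by linarith)]; ring,
      mul_one_div]
  calc _ ≤ W ^ σ / σ + W ^ σ / (1-σ) := add_le_add h1 h2
    _ = (1/σ + 1/(1-σ)) * W ^ σ := by ring

end


theorem perturbed_kernel_iterated_deriv_norm_estimate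
    (σ : ℝ) (hσ0 : 0 < σ) (hσ1 : σ < 1) (n : ℕ) (hn : 1 ≤ n) :
    ∃ C : ℝ, ∀ z : ℂ, 0 < (z ^ 2).re →
      ∫ t in Ioi (0:ℝ),
          ‖iteratedDeriv n
              (fun s : ℝ => (Complex.exp (-z ^ 2 / (4 * s)) - 1) * (s : ℂ) ^ ((σ - 1 : ℝ) : ℂ))
              t‖ * t ^ n ≤
        C * ‖z‖ ^ (2 * n) / ((z ^ 2).re) ^ ((n : ℝ) - σ) := by
  set K : ℝ := (∑ i ∈ Finset.range n, |pkCoef σ n (i+1)| * Real.Gamma ((i:ℝ)+1-σ))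
    + 2*|pkCoef σ n 0| * (1/σ + 1/(1-σ)) with hK
  refine ⟨K * (4:ℝ) ^ (-σ), fun z hz => ?_⟩
  set w : ℂ := z^2/4 with hw
  have ha4 : w.re = (z^2).re/4 := by
    rw [hw, show (4:ℂ) = ((4:ℝ):ℂ) from by norm_num, Complex.div_ofReal_re]
  set a : ℝ := w.re with haw
  have ha : 0 < a := by rw [ha4]; positivity
  set W : ℝ := ‖w‖ with hWdef
  have haW : a ≤ W := Complex.re_le_norm w
  have hW : 0 < W := lt_of_lt_of_le ha haW
  -- the dominating function
  set G : ℝ → ℝ := fun t =>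
    (∑ i ∈ Finset.range n, |pkCoef σ n (i+1)| * W^(i+1) *
      (Real.exp (-(a/t)) * t ^ (-((i:ℝ)+1-σ) - 1)))
    + 2*|pkCoef σ n 0| * (min 1 (W/t) * t ^ (σ-1)) with hG
  have hb_pos : ∀ i : ℕ, (0:ℝ) < (i:ℝ)+1-σ := fun i => by
    have : (0:ℝ) ≤ i := Nat.cast_nonneg i
    linarith
  have hGsum_int : ∀ i ∈ Finset.range n, Integrable
      (fun t : ℝ => |pkCoef σ n (i+1)| * W^(i+1) *
        (Real.exp (-(a/t)) * t ^ (-((i:ℝ)+1-σ) - 1))) (volume.restrict (Ioi 0)) :=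
    fun i _ => (pk_integrableOn_exp_inv a ((i:ℝ)+1-σ) ha (hb_pos i)).const_mul _
  have hGmin_int : Integrable
      (fun t : ℝ => 2*|pkCoef σ n 0| * (min 1 (W/t) * t ^ (σ-1)))
      (volume.restrict (Ioi 0)) :=
    (pk_min_integrableOn hW hσ0 hσ1).const_mul _
  have hGint : Integrable G (volume.restrict (Ioi 0)) := by
    rw [hG]
    exact (integrable_finset_sum _ hGsum_int).add hGmin_int
  -- step A : LHS ≤ ∫ G
  have hA : (∫ t in Ioi (0:ℝ),
      ‖iteratedDeriv n
          (fun s : ℝ => (Complex.exp (-z ^ 2 / (4 * s)) - 1) * (s : ℂ) ^ ((σ - 1 : ℝ) : ℂ))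
          t‖ * t ^ n) ≤ ∫ t in Ioi (0:ℝ), G t := by
    refine integral_mono_of_nonneg ?_ hGint ?_
    · refine (ae_restrict_iff' measurableSet_Ioi).mpr (ae_of_all _ (fun t ht => ?_))
      have ht0 : (0:ℝ) < t := ht
      positivity
    · refine (ae_restrict_iff' measurableSet_Ioi).mpr (ae_of_all _ (fun t ht => ?_))
      have ht0 : (0:ℝ) < t := ht
      dsimp only
      rw [pk_iteratedDeriv σ z n t ht]
      exact pk_norm_bound σ w ha n t ht0
  -- step B : compute/bound ∫ G
  have hB : (∫ t in Ioi (0:ℝ), G t) ≤ K * (W^n * a ^ (σ - (n:ℝ))) := by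
    rw [hG]
    rw [integral_add (integrable_finset_sum _ hGsum_int) hGmin_int,
      integral_finset_sum _ hGsum_int]
    have hterm : ∀ i ∈ Finset.range n,
        (∫ t in Ioi (0:ℝ), |pkCoef σ n (i+1)| * W^(i+1) *
          (Real.exp (-(a/t)) * t ^ (-((i:ℝ)+1-σ) - 1)))
        ≤ |pkCoef σ n (i+1)| * Real.Gamma ((i:ℝ)+1-σ) * (W^n * a ^ (σ - (n:ℝ))) := by
      intro i hi
      have hin : i + 1 ≤ n := Finset.mem_range.mp hi
      rw [integral_const_mul, pk_integral_exp_inv a ((i:ℝ)+1-σ) ha (hb_pos i)]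
      have hexp : a ^ (-((i:ℝ)+1-σ)) = a ^ (σ - (n:ℝ)) * a ^ ((n - (i+1) : ℕ)) := by
        rw [← Real.rpow_natCast a (n - (i+1)), ← Real.rpow_add ha]
        congr 1
        push_cast [Nat.cast_sub hin]
        ring
      rw [hexp]
      have hWa : W^(i+1) * a ^ ((n - (i+1) : ℕ)) ≤ W^n := by
        calc W^(i+1) * a ^ ((n - (i+1) : ℕ)) ≤ W^(i+1) * W ^ ((n - (i+1) : ℕ)) := by
              exact mul_le_mul_of_nonneg_left (pow_le_pow_left₀ ha.le haW _)
                (pow_nonneg hW.le _)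
          _ = W^n := by rw [← pow_add]; congr 1; omega
      calc |pkCoef σ n (i+1)| * W^(i+1) * (Real.Gamma ((i:ℝ)+1-σ) *
              (a ^ (σ - (n:ℝ)) * a ^ ((n - (i+1) : ℕ))))
          = |pkCoef σ n (i+1)| * Real.Gamma ((i:ℝ)+1-σ) *
              ((W^(i+1) * a ^ ((n - (i+1) : ℕ))) * a ^ (σ - (n:ℝ))) := by ring
        _ ≤ |pkCoef σ n (i+1)| * Real.Gamma ((i:ℝ)+1-σ) * (W^n * a ^ (σ - (n:ℝ))) := by
            refine mul_le_mul_of_nonneg_left ?_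
              (mul_nonneg (abs_nonneg _) (Real.Gamma_nonneg_of_nonneg (hb_pos i).le))
            exact mul_le_mul_of_nonneg_right hWa (Real.rpow_nonneg ha.le _)
    have hmin : (∫ t in Ioi (0:ℝ), 2*|pkCoef σ n 0| * (min 1 (W/t) * t ^ (σ-1)))
        ≤ 2*|pkCoef σ n 0| * (1/σ + 1/(1-σ)) * (W^n * a ^ (σ - (n:ℝ))) := by
      rw [integral_const_mul]
      have h1 := pk_min_integral_le hW hσ0 hσ1
      have h2 : (1/σ + 1/(1-σ)) * W ^ σ ≤ (1/σ + 1/(1-σ)) * (W^n * a ^ (σ - (n:ℝ))) := by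
        refine mul_le_mul_of_nonneg_left ?_ (by
          have h3 : (0:ℝ) < 1 - σ := by linarith
          positivity)
        have hWσ : W ^ σ = W^n * W ^ (σ - (n:ℝ)) := by
          rw [← Real.rpow_natCast W n, ← Real.rpow_add hW]
          congr 1
          ring
        rw [hWσ]
        refine mul_le_mul_of_nonneg_left ?_ (pow_nonneg hW.le _)
        refine Real.rpow_le_rpow_of_nonpos ha haW ?_
        have h1n : (1:ℝ) ≤ (n:ℝ) := by exact_mod_cast hn
        linarith
      calc 2*|pkCoef σ n 0| * ∫ t in Ioi (0:ℝ), min 1 (W/t) * t ^ (σ-1)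
          ≤ 2*|pkCoef σ n 0| * ((1/σ + 1/(1-σ)) * W ^ σ) :=
            mul_le_mul_of_nonneg_left h1 (by positivity)
        _ ≤ 2*|pkCoef σ n 0| * ((1/σ + 1/(1-σ)) * (W^n * a ^ (σ - (n:ℝ)))) :=
            mul_le_mul_of_nonneg_left h2 (by positivity)
        _ = 2*|pkCoef σ n 0| * (1/σ + 1/(1-σ)) * (W^n * a ^ (σ - (n:ℝ))) := by ring
    calc (∑ i ∈ Finset.range n, ∫ t in Ioi (0:ℝ), |pkCoef σ n (i+1)| * W^(i+1) *
            (Real.exp (-(a/t)) * t ^ (-((i:ℝ)+1-σ) - 1)))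
          + ∫ t in Ioi (0:ℝ), 2*|pkCoef σ n 0| * (min 1 (W/t) * t ^ (σ-1))
        ≤ (∑ i ∈ Finset.range n, |pkCoef σ n (i+1)| * Real.Gamma ((i:ℝ)+1-σ)
              * (W^n * a ^ (σ - (n:ℝ))))
          + 2*|pkCoef σ n 0| * (1/σ + 1/(1-σ)) * (W^n * a ^ (σ - (n:ℝ))) :=
          add_le_add (Finset.sum_le_sum hterm) hmin
      _ = K * (W^n * a ^ (σ - (n:ℝ))) := by rw [hK, ← Finset.sum_mul]; ring
  -- step C : identify the right-hand side
  have hC : K * (W^n * a ^ (σ - (n:ℝ)))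
      = K * (4:ℝ) ^ (-σ) * ‖z‖ ^ (2 * n) / ((z ^ 2).re) ^ ((n : ℝ) - σ) := by
    have hWz : W = ‖z‖^2/4 := by
      rw [hWdef, hw, norm_div, norm_pow]
      norm_num
    have hWn : W^n = ‖z‖ ^ (2*n) / 4^n := by
      rw [hWz, div_pow, ← pow_mul]
    have hre : (0:ℝ) < (z^2).re := hz
    have han : a ^ (σ - (n:ℝ)) = (z^2).re ^ (σ - (n:ℝ)) / (4:ℝ) ^ (σ - (n:ℝ)) := by
      rw [ha4, Real.div_rpow hre.le (by norm_num : (0:ℝ) ≤ 4)]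
    rw [hWn, han]
    have h4 : (4:ℝ)^n * (4:ℝ) ^ (σ - (n:ℝ)) = (4:ℝ) ^ σ := by
      rw [← Real.rpow_natCast (4:ℝ) n, ← Real.rpow_add (by norm_num : (0:ℝ) < 4)]
      congr 1
      ring
    have hneg : (z^2).re ^ (σ - (n:ℝ)) = ((z^2).re ^ ((n:ℝ) - σ))⁻¹ := by
      rw [show σ - (n:ℝ) = -((n:ℝ) - σ) from by ring, Real.rpow_neg hre.le]
    have h4inv : (4:ℝ) ^ (-σ) = ((4:ℝ) ^ σ)⁻¹ := by
      rw [Real.rpow_neg (by norm_num : (0:ℝ) ≤ 4)]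
    rw [hneg, h4inv]
    field_simp
    rw [← h4]
    ring
  exact le_of_le_of_eq (hA.trans hB) hC
end
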